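/- With the hypotheses of the partition construction (F a CIF(k,t) whose transversal family F^⊤ is partitioned into C₁,…,Cₙ with every member of Cᵢ a blocking set of F^⊤ ∖ Cᵢ), the number of parts satisfies n ≤ (1/2)·C(2t, t). -/

import Mathlib

open Finset

variable {α : Type*} {β : Type*}

/-- `C` is a blocking set of the family `F`: it meets every block of `F`. -/
def IsBlocking (F : Set (Finset α)) (C : Finset α) : Prop :=
  ∀ B ∈ F, ∃ x ∈ B, x ∈ C

/-- The transversal number `τ(F)`: the minimum size of a (finite) blocking set. -/
noncomputable def tau (F : Set (Finset α)) : ℕ :=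
  sInf {n | ∃ C : Finset α, C.card = n ∧ IsBlocking F C}

/-- The family `F^⊤` of transversals, i.e. minimum-size blocking sets of `F`. -/
noncomputable def transversals (F : Set (Finset α)) : Set (Finset α) :=
  {C | IsBlocking F C ∧ C.card = tau F}

/-- A family is intersecting if any two of its blocks meet. -/
def FamIntersecting (F : Set (Finset α)) : Prop :=
  ∀ A ∈ F, ∀ B ∈ F, ∃ x ∈ A, x ∈ B

/-- A family is `k`-uniform if all its blocks have size `k`. -/
def FamUniform (F : Set (Finset α)) (k : ℕ) : Prop :=
  ∀ B ∈ F, B.card = k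

/-- `F` has a finite blocking set (τ(F) < ∞). -/
def HasBlocking (F : Set (Finset α)) : Prop :=
  ∃ C : Finset α, IsBlocking F C

/-- Maximal intersecting family of `k`-sets: uniform, τ < ∞ and `F = F^⊤`. -/
noncomputable def MIF (F : Set (Finset α)) (k : ℕ) : Prop :=
  FamUniform F k ∧ HasBlocking F ∧ F = transversals F

/-- Closed intersecting family `CIF(k,t)`: a `k`-uniform intersecting family with
`τ(F) = t ≤ k - 1` and `F = (F ∪ F^⊤)^⊤`. -/
noncomputable def CIF (F : Set (Finset α)) (k t : ℕ) : Prop :=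
  FamUniform F k ∧ FamIntersecting F ∧ tau F = t ∧ t ≤ k - 1 ∧
    F = transversals (F ∪ transversals F)

/-- The point set of a family. -/
def pts (F : Set (Finset α)) : Set α := ⋃ B ∈ F, (B : Set α)

/-- `G ⊛ H`: all unions `A ∪ B` with `A ∈ G`, `B ∈ H` (for point-disjoint families
these are disjoint unions). -/
def star [DecidableEq α] (G H : Set (Finset α)) : Set (Finset α) :=
  {C | ∃ A ∈ G, ∃ B ∈ H, C = A ∪ B}



/-- A permutation of `Fin (2*t)` sending `{k | k < t}` onto `r`. -/
noncomputable def bolRho {t : ℕ} (r : Finset (Fin (2 * t))) (hr : r.card = t) :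
    Equiv.Perm (Fin (2 * t)) :=
  ((finCongr (two_mul t)).trans finSumFinEquiv.symm).trans <|
    (Equiv.sumCongr (r.orderIsoOfFin hr).toEquiv
      ((rᶜ.orderIsoOfFin (by rw [Finset.card_compl, hr, Fintype.card_fin]; omega)).toEquiv.trans
        (Equiv.subtypeEquivRight fun x => Finset.mem_compl))).trans
      (Equiv.sumCompl (· ∈ r))

lemma bolRho_mem {t : ℕ} (r : Finset (Fin (2 * t))) (hr : r.card = t) (k : Fin (2 * t)) :
    bolRho r hr k ∈ r ↔ (k : ℕ) < t := by
  unfold bolRho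
  rcases he : finSumFinEquiv.symm (finCongr (two_mul t) k) with a | a
  · have hk : (k : ℕ) = (a : ℕ) := by
      have : finCongr (two_mul t) k = finSumFinEquiv (Sum.inl a) := by
        rw [← he, Equiv.apply_symm_apply]
      have := congrArg Fin.val this
      simpa using this
    simp only [Equiv.trans_apply, he, Equiv.sumCongr_apply, Sum.map_inl,
      Equiv.sumCompl_apply_inl]
    exact iff_of_true (Finset.coe_mem _) (hk ▸ a.isLt)
  · have hk : (k : ℕ) = (a : ℕ) + t := by
      have : finCongr (two_mul t) k = finSumFinEquiv (Sum.inr a) := by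
        rw [← he, Equiv.apply_symm_apply]
      have := congrArg Fin.val this
      simpa using this
    simp only [Equiv.trans_apply, he, Equiv.sumCongr_apply, Sum.map_inr,
      Equiv.sumCompl_apply_inr]
    refine iff_of_false (fun hmem => ?_) (by omega)
    set b := (rᶜ.orderIsoOfFin (by rw [Finset.card_compl, hr, Fintype.card_fin]; omega)) a
      with hb
    have h2 : (b : Fin (2 * t)) ∈ rᶜ := Finset.coe_mem _
    rw [Finset.mem_compl] at h2
    exact h2 hmem

/-- Permutation of `Fin m` that, on a `2*t`-set `Q`, moves the positions indexed by `r`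
to the bottom `t` positions of `Q`. -/
noncomputable def bolSort {m t : ℕ} (Q : Finset (Fin m)) (r : Finset (Fin (2 * t))) :
    Equiv.Perm (Fin m) := by
  classical
  exact if h : Q.card = 2 * t ∧ r.card = t then
    Equiv.Perm.subtypeCongr
      ((Q.orderIsoOfFin h.1).toEquiv.symm.trans
        ((bolRho r h.2).symm.trans (Q.orderIsoOfFin h.1).toEquiv))
      (Equiv.refl _)
  else 1

lemma bolSort_apply_mem {m t : ℕ} {Q : Finset (Fin m)} {r : Finset (Fin (2 * t))}
    (h1 : Q.card = 2 * t) (h2 : r.card = t) {x : Fin m} (hx : x ∈ Q) :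
    bolSort Q r x =
      ↑(Q.orderIsoOfFin h1 ((bolRho r h2).symm ((Q.orderIsoOfFin h1).symm ⟨x, hx⟩))) := by
  classical
  rw [bolSort]
  rw [dif_pos ⟨h1, h2⟩]
  exact Equiv.Perm.subtypeCongr.left_apply _ _ hx

lemma bolSort_mem {m t : ℕ} {Q : Finset (Fin m)} {r : Finset (Fin (2 * t))}
    (h1 : Q.card = 2 * t) (h2 : r.card = t) {x : Fin m} (hx : x ∈ Q) :
    bolSort Q r x ∈ Q := by
  rw [bolSort_apply_mem h1 h2 hx]; exact Finset.coe_mem _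

lemma bollobas_fin {m t : ℕ} {ι : Type*} [Fintype ι] (A B : ι → Finset (Fin m))
    (hA : ∀ i, (A i).card = t) (hB : ∀ i, (B i).card = t)
    (hd : ∀ i, Disjoint (A i) (B i))
    (hx : ∀ i j, i ≠ j → ∃ x, x ∈ A i ∧ x ∈ B j) :
    Fintype.card ι ≤ (2 * t).choose t := by
  classical
  set M := Fintype.card (Equiv.Perm (Fin m)) with hM
  set Cc := (2 * t).choose t with hCc
  set good : ι → Equiv.Perm (Fin m) → Prop :=
    fun i σ => ∀ a ∈ A i, ∀ b ∈ B i, σ a < σ b with hgood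
  set G : ι → Finset (Equiv.Perm (Fin m)) :=
    fun i => Finset.univ.filter (good i) with hG
  have hGdisj : ∀ i j, i ≠ j → Disjoint (G i) (G j) := by
    intro i j hij
    rw [Finset.disjoint_left]
    intro σ hσi hσj
    rw [hG, Finset.mem_filter] at hσi hσj
    obtain ⟨x, hxA, hxB⟩ := hx i j hij
    obtain ⟨y, hyA, hyB⟩ := hx j i hij.symm
    exact absurd (hσi.2 x hxA y hyB) (not_lt.2 (le_of_lt (hσj.2 y hyA x hxB)))
  have key : ∀ i, M ≤ (G i).card * Cc := by
    intro i
    have hU : (A i ∪ B i).card = 2 * t := by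
      rw [Finset.card_union_of_disjoint (hd i), hA, hB]; omega
    set U := A i ∪ B i with hUdef
    have hQc : ∀ σ : Equiv.Perm (Fin m), (U.image σ).card = 2 * t := fun σ => by
      rw [Finset.card_image_of_injective _ σ.injective, hU]
    set Rr : Equiv.Perm (Fin m) → Finset (Fin (2 * t)) := fun σ =>
      Finset.univ.filter fun k => ↑((U.image σ).orderIsoOfFin (hQc σ) k) ∈ (A i).image σ
      with hRr
    have hAU : ∀ σ : Equiv.Perm (Fin m), (A i).image σ ⊆ U.image σ :=
      fun σ => Finset.image_subset_image Finset.subset_union_left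
    have hRc : ∀ σ, (Rr σ).card = t := by
      intro σ
      have : (Rr σ).card = ((A i).image σ).card := by
        apply Finset.card_bij (fun k _ => ↑((U.image σ).orderIsoOfFin (hQc σ) k))
        · intro k hk
          rw [hRr, Finset.mem_filter] at hk
          exact hk.2
        · intro k1 h1 k2 h2 hkk
          exact ((U.image σ).orderIsoOfFin (hQc σ)).injective (Subtype.ext hkk)
        · intro y hy
          have hyQ : y ∈ U.image σ := hAU σ hy
          refine ⟨((U.image σ).orderIsoOfFin (hQc σ)).symm ⟨y, hyQ⟩, ?_, ?_⟩
          · rw [hRr, Finset.mem_filter]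
            refine ⟨Finset.mem_univ _, ?_⟩
            rw [OrderIso.apply_symm_apply]
            exact hy
          · rw [OrderIso.apply_symm_apply]
      rw [this, Finset.card_image_of_injective _ σ.injective, hA]
    -- the injection
    set Φ : Equiv.Perm (Fin m) → Equiv.Perm (Fin m) × Finset (Fin (2 * t)) := fun σ =>
      (bolSort (U.image σ) (Rr σ) * σ, Rr σ) with hΦ
    have himgsort : ∀ σ : Equiv.Perm (Fin m),
        U.image ⇑(bolSort (U.image σ) (Rr σ) * σ) = U.image σ := by
      intro σ
      have h1 : U.image ⇑(bolSort (U.image σ) (Rr σ) * σ)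
          = (U.image σ).image (bolSort (U.image σ) (Rr σ)) := by
        rw [Finset.image_image]; rfl
      rw [h1]
      apply Finset.eq_of_subset_of_card_le
      · intro y hy
        rw [Finset.mem_image] at hy
        obtain ⟨z, hz, rfl⟩ := hy
        exact bolSort_mem (hQc σ) (hRc σ) hz
      · rw [Finset.card_image_of_injective _ (bolSort (U.image σ) (Rr σ)).injective]
    have hgoodΦ : ∀ σ : Equiv.Perm (Fin m), (bolSort (U.image σ) (Rr σ) * σ) ∈ G i := by
      intro σ
      rw [hG, Finset.mem_filter]
      refine ⟨Finset.mem_univ _, ?_⟩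
      intro a ha b hb
      have haU : σ a ∈ U.image σ :=
        Finset.mem_image_of_mem _ (Finset.mem_union_left _ ha)
      have hbU : σ b ∈ U.image σ :=
        Finset.mem_image_of_mem _ (Finset.mem_union_right _ hb)
      have hta := bolSort_apply_mem (hQc σ) (hRc σ) haU
      have htb := bolSort_apply_mem (hQc σ) (hRc σ) hbU
      set q := (U.image σ).orderIsoOfFin (hQc σ) with hq
      set ka := (bolRho (Rr σ) (hRc σ)).symm (q.symm ⟨σ a, haU⟩) with hka
      set kb := (bolRho (Rr σ) (hRc σ)).symm (q.symm ⟨σ b, hbU⟩) with hkb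
      have hamem : q.symm ⟨σ a, haU⟩ ∈ Rr σ := by
        rw [hRr, Finset.mem_filter]
        refine ⟨Finset.mem_univ _, ?_⟩
        rw [← hq, OrderIso.apply_symm_apply]
        exact Finset.mem_image_of_mem _ ha
      have hbmem : q.symm ⟨σ b, hbU⟩ ∉ Rr σ := by
        rw [hRr, Finset.mem_filter, ← hq, OrderIso.apply_symm_apply]
        intro hcon
        rw [Finset.mem_image] at hcon
        obtain ⟨a', ha', heq'⟩ := hcon.2
        have : a' = b := σ.injective heq'
        subst this
        exact (Finset.disjoint_left.mp (hd i) ha') hb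
      have hkalt : (ka : ℕ) < t := by
        rw [← bolRho_mem (Rr σ) (hRc σ) ka, hka, Equiv.apply_symm_apply]
        exact hamem
      have hkbge : ¬ ((kb : ℕ) < t) := by
        rw [← bolRho_mem (Rr σ) (hRc σ) kb, hkb, Equiv.apply_symm_apply]
        exact hbmem
      have hklt : ka < kb := by
        rw [Fin.lt_def]; omega
      calc (bolSort (U.image σ) (Rr σ) * σ) a = ↑(q ka) := hta
        _ < ↑(q kb) := by
            have := q.strictMono hklt
            exact this
        _ = (bolSort (U.image σ) (Rr σ) * σ) b := htb.symm
    have hinj : Function.Injective Φ := by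
      intro σ₁ σ₂ heq
      rw [hΦ] at heq
      have hr12 : Rr σ₁ = Rr σ₂ := congrArg Prod.snd heq
      have hτ : bolSort (U.image σ₁) (Rr σ₁) * σ₁ = bolSort (U.image σ₂) (Rr σ₂) * σ₂ :=
        congrArg Prod.fst heq
      have hQ12 : U.image σ₁ = U.image σ₂ := by
        rw [← himgsort σ₁, ← himgsort σ₂, hτ]
      have hπ : bolSort (U.image σ₁) (Rr σ₁) = bolSort (U.image σ₂) (Rr σ₂) := by
        rw [hQ12, hr12]
      rw [hπ] at hτ
      exact mul_left_cancel hτ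
    -- counting
    have hcard : M ≤ ((G i) ×ˢ Finset.powersetCard t (Finset.univ : Finset (Fin (2 * t)))).card := by
      rw [hM, ← Finset.card_univ]
      apply Finset.card_le_card_of_injOn Φ
      · intro σ _
        rw [Finset.mem_coe, Finset.mem_product]
        constructor
        · exact hgoodΦ σ
        · rw [Finset.mem_powersetCard]
          exact ⟨Finset.subset_univ _, hRc σ⟩
      · exact hinj.injOn
    calc M ≤ _ := hcard
      _ = (G i).card * Cc := by
          rw [Finset.card_product, Finset.card_powersetCard, Finset.card_univ,
            Fintype.card_fin, hCc]
  have hsum : ∑ i : ι, (G i).card ≤ M := by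
    rw [← Finset.card_biUnion (fun i _ j _ h => hGdisj i j h)]
    rw [hM, ← Finset.card_univ]
    exact Finset.card_le_card (Finset.subset_univ _)
  have hmain : Fintype.card ι * M ≤ M * Cc := by
    calc Fintype.card ι * M = ∑ _i : ι, M := by
          rw [Finset.sum_const, Finset.card_univ, smul_eq_mul]
      _ ≤ ∑ i : ι, (G i).card * Cc := Finset.sum_le_sum fun i _ => key i
      _ = (∑ i : ι, (G i).card) * Cc := (Finset.sum_mul _ _ _).symm
      _ ≤ M * Cc := Nat.mul_le_mul_right _ hsum
  have hMpos : 0 < M := Fintype.card_pos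
  rw [mul_comm M Cc] at hmain
  exact Nat.le_of_mul_le_mul_right hmain hMpos

lemma bollobas_pairs {α : Type*} {t : ℕ} {ι : Type*} [Fintype ι] (A B : ι → Finset α)
    (hA : ∀ i, (A i).card = t) (hB : ∀ i, (B i).card = t)
    (hd : ∀ i, Disjoint (A i) (B i))
    (hx : ∀ i j, i ≠ j → ∃ x, x ∈ A i ∧ x ∈ B j) :
    Fintype.card ι ≤ (2 * t).choose t := by
  classical
  set X : Finset α := Finset.univ.biUnion (fun i => A i ∪ B i) with hX
  have hsubA : ∀ i, A i ⊆ X := fun i a ha => Finset.mem_biUnion.2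
    ⟨i, Finset.mem_univ _, Finset.mem_union_left _ ha⟩
  have hsubB : ∀ i, B i ⊆ X := fun i a ha => Finset.mem_biUnion.2
    ⟨i, Finset.mem_univ _, Finset.mem_union_right _ ha⟩
  set e : {x // x ∈ X} ≃ Fin X.card :=
    (Fintype.equivFin _).trans (finCongr (Fintype.card_coe X)) with he
  set f : Finset α → Finset (Fin X.card) := fun s =>
    (s.subtype (· ∈ X)).map e.toEmbedding with hf
  have hmemf : ∀ (s : Finset α) (y : Fin X.card),
      y ∈ f s ↔ ∃ x : {x // x ∈ X}, ↑x ∈ s ∧ e x = y := by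
    intro s y
    rw [hf]
    simp only [Finset.mem_map, Finset.mem_subtype, Equiv.coe_toEmbedding]
  have hcardf : ∀ s : Finset α, s ⊆ X → (f s).card = s.card := by
    intro s hs
    rw [hf, Finset.card_map, Finset.card_subtype, Finset.filter_true_of_mem hs]
  refine bollobas_fin (fun i => f (A i)) (fun i => f (B i))
    (fun i => by rw [hcardf _ (hsubA i), hA])
    (fun i => by rw [hcardf _ (hsubB i), hB]) ?_ ?_
  · intro i
    rw [Finset.disjoint_left]
    intro y hyA hyB
    rw [hmemf] at hyA hyB
    obtain ⟨x1, hx1, hex1⟩ := hyA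
    obtain ⟨x2, hx2, hex2⟩ := hyB
    have : x1 = x2 := e.injective (hex1.trans hex2.symm)
    subst this
    exact Finset.disjoint_left.mp (hd i) hx1 hx2
  · intro i j hij
    obtain ⟨x, hxA, hxB⟩ := hx i j hij
    refine ⟨e ⟨x, hsubA i hxA⟩, ?_, ?_⟩
    · rw [hmemf]; exact ⟨⟨x, hsubA i hxA⟩, hxA, rfl⟩
    · rw [hmemf]; exact ⟨⟨x, hsubA i hxA⟩, hxB, rfl⟩

theorem stmt_8 (F : Set (Finset α)) (k t n : ℕ)
    (hF : CIF F k t) (hFne : F.Nonempty) (C : Fin n → Set (Finset α))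
    (hne : ∀ i, (C i).Nonempty)
    (hcover : transversals F = ⋃ i, C i)
    (hdisjC : Pairwise fun i j => Disjoint (C i) (C j))
    (hblock : ∀ i, ∀ T ∈ C i, IsBlocking (transversals F \ C i) T) :
    2 * n ≤ Nat.choose (2 * t) t := by
  classical
  obtain ⟨hunif, hint, htau, htk, hclosed⟩ := hF
  obtain ⟨B₀, hB₀⟩ := hFne
  have hB₀' : B₀ ∈ transversals (F ∪ transversals F) := by rw [← hclosed]; exact hB₀
  have hSne : {nn | ∃ Cb : Finset α, Cb.card = nn ∧ IsBlocking F Cb}.Nonempty :=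
    ⟨B₀.card, B₀, rfl, fun Bb hBb => hB₀'.1 Bb (Or.inl hBb)⟩
  obtain ⟨T₀, hT₀card, hT₀b⟩ := Nat.sInf_mem hSne
  have ht1 : 1 ≤ t := by
    by_contra h
    push_neg at h
    have ht0 : t = 0 := by omega
    have : T₀ = ∅ := by
      rw [← Finset.card_eq_zero, hT₀card]
      show tau F = 0
      rw [htau, ht0]
    obtain ⟨x, -, hx⟩ := hT₀b B₀ hB₀
    rw [this] at hx
    exact absurd hx (Finset.notMem_empty x)
  have hCsubT : ∀ i, C i ⊆ transversals F := by
    intro i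
    rw [hcover]
    exact Set.subset_iUnion C i
  have hcard : ∀ S ∈ transversals F, S.card = t := fun S hS => htau ▸ hS.2
  have hpair : ∀ i : Fin n, ∃ T ∈ C i, ∃ T' ∈ C i, Disjoint T T' := by
    intro i
    by_contra hcon
    push_neg at hcon
    obtain ⟨T, hT⟩ := hne i
    have hTtrans : T ∈ transversals F := hCsubT i hT
    have hTblocks : IsBlocking (F ∪ transversals F) T := by
      rintro S (hS | hS)
      · exact hTtrans.1 S hS
      · by_cases hSC : S ∈ C i
        · have hnd := hcon T hT S hSC
          rw [Finset.not_disjoint_iff] at hnd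
          obtain ⟨x, hx1, hx2⟩ := hnd
          exact ⟨x, hx2, hx1⟩
        · exact hblock i T hT S ⟨hS, hSC⟩
    have hTcard : T.card = t := hcard T hTtrans
    have htau2 : tau (F ∪ transversals F) = t := by
      apply le_antisymm
      · exact Nat.sInf_le ⟨T, hTcard, hTblocks⟩
      · refine le_csInf ⟨T.card, T, rfl, hTblocks⟩ ?_
        rintro nn ⟨Cb, hCbcard, hCbb⟩
        have hCbF : IsBlocking F Cb := fun Bb hBb => hCbb Bb (Or.inl hBb)
        rw [← htau, ← hCbcard]
        exact Nat.sInf_le ⟨Cb, rfl, hCbF⟩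
    have hTF : T ∈ F := by
      rw [hclosed]
      exact ⟨hTblocks, hTcard.trans htau2.symm⟩
    have hk := hunif T hTF
    omega
  choose T hTmem T' hT'mem hdisj using hpair
  have hmeet : ∀ (i j : Fin n), i ≠ j → ∀ X ∈ C i, ∀ Y ∈ C j, ∃ x, x ∈ X ∧ x ∈ Y := by
    intro i j hij X hX Y hY
    have hYmem : Y ∈ transversals F \ C i :=
      ⟨hCsubT j hY, fun hYC => (Set.disjoint_left.mp (hdisjC hij) hYC) hY⟩
    obtain ⟨x, hx1, hx2⟩ := hblock i X hX Y hYmem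
    exact ⟨x, hx2, hx1⟩
  have hself : ∀ S ∈ transversals F, ∃ x, x ∈ S ∧ x ∈ S := by
    intro S hS
    have hc := hcard S hS
    have : S.Nonempty := Finset.card_pos.mp (by omega)
    obtain ⟨x, hx⟩ := this
    exact ⟨x, hx, hx⟩
  set Aa : Fin n ⊕ Fin n → Finset α := Sum.elim T T' with hAa
  set Bb : Fin n ⊕ Fin n → Finset α := Sum.elim T' T with hBb
  have hmain : Fintype.card (Fin n ⊕ Fin n) ≤ (2 * t).choose t := by
    apply bollobas_pairs Aa Bb
    · rintro (i | i)
      · exact hcard _ (hCsubT i (hTmem i))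
      · exact hcard _ (hCsubT i (hT'mem i))
    · rintro (i | i)
      · exact hcard _ (hCsubT i (hT'mem i))
      · exact hcard _ (hCsubT i (hTmem i))
    · rintro (i | i)
      · exact hdisj i
      · exact (hdisj i).symm
    · rintro (i | i) (j | j) hij
      · have hij' : i ≠ j := fun h => hij (by rw [h])
        exact hmeet i j hij' (T i) (hTmem i) (T' j) (hT'mem j)
      · by_cases h : i = j
        · subst h
          exact hself (T i) (hCsubT i (hTmem i))
        · exact hmeet i j h (T i) (hTmem i) (T j) (hTmem j)
      · by_cases h : i = j
        · subst h
          exact hself (T' i) (hCsubT i (hT'mem i))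
        · exact hmeet i j h (T' i) (hT'mem i) (T' j) (hT'mem j)
      · have hij' : i ≠ j := fun h => hij (by rw [h])
        exact hmeet i j hij' (T' i) (hT'mem i) (T j) (hTmem j)
  rw [Fintype.card_sum, Fintype.card_fin] at hmain
  omega
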